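/- Let Y, X ∈ ℝ^{n×N} be such that all singular values of YXᵀ are strictly positive (i.e., YXᵀ is invertible). Then the maximizer of tr(WYXᵀ) over orthogonal W ∈ ℝ^{n×n} is unique. -/

import Mathlib

open Matrix
open scoped MatrixOrder

private lemma trace_sq_nonneg {n : ℕ} (B : Matrix (Fin n) (Fin n) ℝ) :
    0 ≤ (Bᵀ * B).trace := by
  rw [Matrix.trace]
  refine Finset.sum_nonneg fun i _ => ?_
  simp only [Matrix.diag_apply, Matrix.mul_apply, Matrix.transpose_apply]
  exact Finset.sum_nonneg fun j _ => mul_self_nonneg _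

private lemma eq_zero_of_trace_sq {n : ℕ} (B : Matrix (Fin n) (Fin n) ℝ)
    (h : (Bᵀ * B).trace = 0) : B = 0 := by
  rw [Matrix.trace] at h
  have h' := (Finset.sum_eq_zero_iff_of_nonneg (fun i _ => ?_)).mp h
  · ext j i
    have := h' i (Finset.mem_univ i)
    simp only [Matrix.diag_apply, Matrix.mul_apply, Matrix.transpose_apply] at this
    have h2 := (Finset.sum_eq_zero_iff_of_nonneg (fun k _ => mul_self_nonneg (B k i))).mp this
    have := h2 j (Finset.mem_univ j)
    simpa [mul_self_eq_zero] using this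
  · simp only [Matrix.diag_apply, Matrix.mul_apply, Matrix.transpose_apply]
    exact Finset.sum_nonneg fun j _ => mul_self_nonneg _

/-- Key lemma: for `O` orthogonal and `S` positive semidefinite and invertible,
`tr (O * S) ≤ tr S`, with equality iff `O = 1`. -/
private lemma key {n : ℕ} {O S : Matrix (Fin n) (Fin n) ℝ}
    (hO : Oᵀ * O = 1) (hS : S.PosSemidef) (hSu : IsUnit S) :
    (O * S).trace ≤ S.trace ∧ ((O * S).trace = S.trace → O = 1) := by
  set A := CFC.sqrt S with hA
  have hAA : A * A = S := CFC.sqrt_mul_sqrt_self S hS.nonneg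
  have hAH : Aᵀ = A := by
    have := (CFC.sqrt_nonneg S).posSemidef.isHermitian
    rwa [Matrix.IsHermitian, Matrix.conjTranspose_eq_transpose_of_trivial] at this
  have hAu : IsUnit A := by
    rw [Matrix.isUnit_iff_isUnit_det] at hSu ⊢
    rw [← hAA, Matrix.det_mul] at hSu
    exact (IsUnit.mul_iff.mp hSu).1
  have hSH : Sᵀ = S := by
    have := hS.isHermitian
    rwa [Matrix.IsHermitian, Matrix.conjTranspose_eq_transpose_of_trivial] at this
  set C := (1 : Matrix (Fin n) (Fin n) ℝ) - O with hC
  have hOS : (Oᵀ * S).trace = (O * S).trace := by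
    rw [← Matrix.trace_transpose (Oᵀ * S), Matrix.transpose_mul, Matrix.transpose_transpose,
      hSH, Matrix.trace_mul_comm]
  have hkey : ((C * A)ᵀ * (C * A)).trace = 2 * (S.trace - (O * S).trace) := by
    have h1 : (C * A)ᵀ * (C * A) = A * (Cᵀ * C) * A := by
      rw [Matrix.transpose_mul, hAH]
      noncomm_ring
    have h2 : Cᵀ * C = 2 • (1 : Matrix (Fin n) (Fin n) ℝ) - Oᵀ - O := by
      rw [hC, Matrix.transpose_sub, Matrix.transpose_one]
      rw [sub_mul, mul_sub, mul_sub, hO, Matrix.one_mul, Matrix.mul_one, Matrix.one_mul]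
      rw [two_smul]
      abel
    have t1 : (S * Oᵀ).trace = (O * S).trace := by rw [Matrix.trace_mul_comm, hOS]
    have t2 : (S * O).trace = (O * S).trace := Matrix.trace_mul_comm S O
    have t3 : S * ((2 : ℕ) • (1 : Matrix (Fin n) (Fin n) ℝ)) = S + S := by
      rw [two_smul]
      rw [Matrix.mul_add, Matrix.mul_one]
    rw [h1, Matrix.trace_mul_cycle, hAA, h2]
    rw [Matrix.mul_sub, Matrix.mul_sub, Matrix.trace_sub, Matrix.trace_sub, t1, t2, t3,
      Matrix.trace_add]
    ring
  have hnn : 0 ≤ 2 * (S.trace - (O * S).trace) := hkey ▸ trace_sq_nonneg (C * A)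
  constructor
  · linarith [hnn]
  · intro heq
    have h0 : ((C * A)ᵀ * (C * A)).trace = 0 := by rw [hkey, heq]; ring
    have hCA : C * A = 0 := eq_zero_of_trace_sq _ h0
    have hC0 : C = 0 := by
      obtain ⟨u, hu⟩ := hAu
      have : C * A * (u⁻¹ : (Matrix (Fin n) (Fin n) ℝ)ˣ) = 0 := by rw [hCA, Matrix.zero_mul]
      rwa [Matrix.mul_assoc, ← hu, Units.mul_inv, Matrix.mul_one] at this
    have : (1 : Matrix (Fin n) (Fin n) ℝ) - O = 0 := hC0
    exact (sub_eq_zero.mp this).symm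

open Matrix in
theorem stmt_11 (n N : ℕ) (Y X : Matrix (Fin n) (Fin N) ℝ)
    (h : IsUnit (Y * Xᵀ)) :
    ∃! W : Matrix (Fin n) (Fin n) ℝ, Wᵀ * W = 1 ∧
      ∀ W' : Matrix (Fin n) (Fin n) ℝ, W'ᵀ * W' = 1 →
        (W' * (Y * Xᵀ)).trace ≤ (W * (Y * Xᵀ)).trace := by
  classical
  set M := Y * Xᵀ with hMdef
  have hPS : PosSemidef (Mᴴ * M) := posSemidef_conjTranspose_mul_self M
  set S := CFC.sqrt (Mᴴ * M) with hSdef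
  have hSS : S * S = Mᴴ * M := CFC.sqrt_mul_sqrt_self _ hPS.nonneg
  have hS : S.PosSemidef := (CFC.sqrt_nonneg _).posSemidef
  have hSH : Sᵀ = S := by
    have := hS.isHermitian
    rwa [Matrix.IsHermitian, Matrix.conjTranspose_eq_transpose_of_trivial] at this
  have hMH : Mᴴ = Mᵀ := Matrix.conjTranspose_eq_transpose_of_trivial M
  have hSu : IsUnit S := by
    rw [Matrix.isUnit_iff_isUnit_det]
    have : IsUnit (S * S).det := by
      rw [hSS, hMH, Matrix.det_mul, Matrix.det_transpose]
      exact ((Matrix.isUnit_iff_isUnit_det M).mp h).mul ((Matrix.isUnit_iff_isUnit_det M).mp h)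
    rw [Matrix.det_mul] at this
    exact (IsUnit.mul_iff.mp this).1
  obtain ⟨u, hu⟩ := hSu
  have hSinv : S * (u⁻¹ : (Matrix (Fin n) (Fin n) ℝ)ˣ) = 1 := by
    rw [← hu]; exact u.mul_inv
  have hSinv' : ((u⁻¹ : (Matrix (Fin n) (Fin n) ℝ)ˣ) : Matrix (Fin n) (Fin n) ℝ) * S = 1 := by
    rw [← hu]; exact u.inv_mul
  set Sinv := ((u⁻¹ : (Matrix (Fin n) (Fin n) ℝ)ˣ) : Matrix (Fin n) (Fin n) ℝ) with hSinvdef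
  have hSinvH : Sinvᵀ = Sinv := by
    have h1 : Sᵀ * Sinvᵀ = 1 := by rw [← Matrix.transpose_mul, hSinv', Matrix.transpose_one]
    rw [hSH] at h1
    calc Sinvᵀ = (Sinv * S) * Sinvᵀ := by rw [hSinv', Matrix.one_mul]
    _ = Sinv * (S * Sinvᵀ) := by rw [Matrix.mul_assoc]
    _ = Sinv := by rw [h1, Matrix.mul_one]
  set Q := M * Sinv with hQdef
  have hQS : Q * S = M := by rw [hQdef, Matrix.mul_assoc, hSinv', Matrix.mul_one]
  have hQO : Qᵀ * Q = 1 := by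
    rw [hQdef, Matrix.transpose_mul, hSinvH]
    have : M ᵀ * (M * Sinv) = S * S * Sinv := by rw [← Matrix.mul_assoc, ← hMH, hSS]
    rw [Matrix.mul_assoc, this, Matrix.mul_assoc, hSinv, Matrix.mul_one, ← hSinv']
  have hQQt : Q * Qᵀ = 1 := mul_eq_one_comm.mp hQO
  set W₀ := Qᵀ with hW₀
  have hW₀O : W₀ᵀ * W₀ = 1 := by rw [hW₀, Matrix.transpose_transpose, hQQt]
  have hW₀M : W₀ * M = S := by
    rw [hW₀, ← hQS, ← Matrix.mul_assoc, hQO, Matrix.one_mul]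
  have hmax : ∀ W' : Matrix (Fin n) (Fin n) ℝ, W'ᵀ * W' = 1 →
      (W' * M).trace ≤ (W₀ * M).trace := by
    intro W' hW'
    have hOO : (W' * Q)ᵀ * (W' * Q) = 1 := by
      rw [Matrix.transpose_mul, Matrix.mul_assoc, ← Matrix.mul_assoc W'ᵀ, hW',
        Matrix.one_mul, hQO]
    have := (key hOO hS ⟨u, hu⟩).1
    rw [hW₀M]
    calc (W' * M).trace = (W' * Q * S).trace := by rw [Matrix.mul_assoc, hQS]
    _ ≤ S.trace := this
  refine ⟨W₀, ⟨hW₀O, hmax⟩, ?_⟩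
  intro W' ⟨hW'O, hW'max⟩
  have h1 : (W' * M).trace ≤ (W₀ * M).trace := hmax W' hW'O
  have h2 : (W₀ * M).trace ≤ (W' * M).trace := hW'max W₀ hW₀O
  have heq : (W' * M).trace = (W₀ * M).trace := le_antisymm h1 h2
  have hOO : (W' * Q)ᵀ * (W' * Q) = 1 := by
    rw [Matrix.transpose_mul, Matrix.mul_assoc, ← Matrix.mul_assoc W'ᵀ, hW'O,
      Matrix.one_mul, hQO]
  have heq' : (W' * Q * S).trace = S.trace := by
    rw [Matrix.mul_assoc, hQS, ← hW₀M, heq]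
  have hone : W' * Q = 1 := (key hOO hS ⟨u, hu⟩).2 heq'
  calc W' = W' * 1 := (Matrix.mul_one W').symm
  _ = W' * (Q * Qᵀ) := by rw [hQQt]
  _ = W' * Q * Qᵀ := (Matrix.mul_assoc W' Q Qᵀ).symm
  _ = 1 * Qᵀ := by rw [hone]
  _ = W₀ := Matrix.one_mul Qᵀ
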